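/- arXiv:1508.03351 — 4 statements merged into one kernel-verified Lean document; each statement's English description precedes it below -/
import Mathlib

section
/- Covariance Intersection consistency for the identity observation case: let a₁,…,a_p be random vectors in ℝⁿ with E[aᵢ] = α, true covariances R̃ᵢ := E[(aᵢ−α)(aᵢ−α)ᵀ], and arbitrary (possibly nonzero) cross-correlations R̃ᵢⱼ := E[(aᵢ−α)(aⱼ−α)ᵀ]. Suppose Rᵢ ⪰ R̃ᵢ ≻ 0 for all i. For weights ωᵢ > 0 with ∑ᵢ ωᵢ = 1, define R_c := (∑ᵢ ωᵢ Rᵢ⁻¹)⁻¹ and α̂_c := R_c ∑ᵢ ωᵢ Rᵢ⁻¹ aᵢ. Then α̂_c is unbiased and R_c ⪰ E[(α̂_c − α)(α̂_c − α)ᵀ]. -/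
open Matrix MeasureTheory

private lemma msum_mulVec {n : ℕ} {ι : Type*} (s : Finset ι)
    (M : ι → Matrix (Fin n) (Fin n) ℝ) (x : Fin n → ℝ) :
    (∑ i ∈ s, M i) *ᵥ x = ∑ i ∈ s, M i *ᵥ x := by
  ext c
  simp only [Matrix.mulVec, dotProduct, Finset.sum_apply, Matrix.sum_apply,
    Finset.sum_mul]
  exact Finset.sum_comm

private lemma mvec_sum {n : ℕ} {ι : Type*} (s : Finset ι)
    (M : Matrix (Fin n) (Fin n) ℝ) (u : ι → Fin n → ℝ) :
    M *ᵥ (∑ i ∈ s, u i) = ∑ i ∈ s, M *ᵥ u i := by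
  ext c
  simp only [Matrix.mulVec, dotProduct, Finset.sum_apply, Finset.mul_sum]
  exact Finset.sum_comm

private lemma dot_sum {n : ℕ} {ι : Type*} (s : Finset ι)
    (v : Fin n → ℝ) (u : ι → Fin n → ℝ) :
    v ⬝ᵥ (∑ i ∈ s, u i) = ∑ i ∈ s, v ⬝ᵥ u i := by
  simp only [dotProduct, Finset.sum_apply, Finset.mul_sum]
  exact Finset.sum_comm

private lemma herm_transpose {n : ℕ} {M : Matrix (Fin n) (Fin n) ℝ}
    (h : M.IsHermitian) : Mᵀ = M := by
  ext c d
  rw [Matrix.transpose_apply]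
  have h2 := congrFun (congrFun h c) d
  simpa [Matrix.conjTranspose_apply] using h2

private lemma herm_dot_swap {n : ℕ} {M : Matrix (Fin n) (Fin n) ℝ}
    (h : M.IsHermitian) (u r : Fin n → ℝ) :
    u ⬝ᵥ (M *ᵥ r) = (M *ᵥ u) ⬝ᵥ r := by
  rw [Matrix.dotProduct_mulVec]
  congr 1
  rw [← Matrix.mulVec_transpose, herm_transpose h]

theorem stmt_3 {n p : ℕ} {Ω : Type*} [MeasureSpace Ω]
    [IsProbabilityMeasure (volume : Measure Ω)]
    (a : Fin p → Ω → Fin n → ℝ) (α : Fin n → ℝ)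
    (hint : ∀ i c, Integrable (fun ω => a i ω c))
    (hint2 : ∀ i j c d, Integrable (fun ω => (a i ω c - α c) * (a j ω d - α d)))
    (hmean : ∀ i c, (∫ ω, a i ω c) = α c)
    (Rt R : Fin p → Matrix (Fin n) (Fin n) ℝ)
    (hRt : ∀ i, Rt i = Matrix.of fun c d => ∫ ω, (a i ω c - α c) * (a i ω d - α d))
    (hRtpd : ∀ i, (Rt i).PosDef)
    (hcons : ∀ i, (R i - Rt i).PosSemidef)
    (w : Fin p → ℝ) (hw : ∀ i, 0 < w i) (hw1 : ∑ i, w i = 1)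
    (Rc : Matrix (Fin n) (Fin n) ℝ) (hRc : Rc = (∑ i, w i • (R i)⁻¹)⁻¹)
    (ahat : Ω → Fin n → ℝ)
    (hahat : ∀ ω, ahat ω = Rc *ᵥ (∑ i, w i • ((R i)⁻¹ *ᵥ a i ω))) :
    (∀ c, (∫ ω, ahat ω c) = α c) ∧
    (Rc - Matrix.of fun c d => ∫ ω, (ahat ω c - α c) * (ahat ω d - α d)).PosSemidef := by
  classical
  have hpne : Nonempty (Fin p) := by
    by_contra h
    rw [not_nonempty_iff] at h
    rw [Finset.univ_eq_empty, Finset.sum_empty] at hw1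
    exact one_ne_zero hw1.symm
  -- positive definiteness of the R i and their inverses
  have hRpd : ∀ i, (R i).PosDef := by
    intro i
    have h : R i = Rt i + (R i - Rt i) := by abel
    rw [h]
    exact (hRtpd i).add_posSemidef (hcons i)
  have hRinvpd : ∀ i, (R i)⁻¹.PosDef := fun i => (hRpd i).inv
  set S : Matrix (Fin n) (Fin n) ℝ := ∑ i, w i • (R i)⁻¹ with hSdef
  have hSherm : S.IsHermitian := by
    unfold Matrix.IsHermitian
    rw [hSdef, Matrix.conjTranspose_sum]
    refine Finset.sum_congr rfl fun i _ => ?_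
    rw [Matrix.conjTranspose_smul, star_trivial, (hRinvpd i).isHermitian]
  have hSpd : S.PosDef := by
    refine Matrix.PosDef.of_dotProduct_mulVec_pos hSherm fun x hx => ?_
    rw [hSdef, msum_mulVec, dot_sum]
    refine Finset.sum_pos (fun i _ => ?_) Finset.univ_nonempty
    rw [Matrix.smul_mulVec, dotProduct_smul, smul_eq_mul]
    exact mul_pos (hw i) (by simpa using (hRinvpd i).dotProduct_mulVec_pos hx)
  have hSunit : IsUnit S.det := hSpd.det_pos.ne'.isUnit
  have hRcpd : Rc.PosDef := by rw [hRc]; exact hSpd.inv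
  have hRcherm : Rc.IsHermitian := hRcpd.isHermitian
  have hRcS : Rc * S = 1 := by rw [hRc]; exact Matrix.nonsing_inv_mul S hSunit
  have hSRc : S * Rc = 1 := by rw [hRc]; exact Matrix.mul_nonsing_inv S hSunit
  -- the weight matrices
  set T : Fin p → Matrix (Fin n) (Fin n) ℝ := fun i => w i • (Rc * (R i)⁻¹) with hTdef
  have hTsum : (∑ i, T i) = 1 := by
    have : (∑ i, T i) = Rc * S := by
      rw [hSdef, Finset.mul_sum]
      exact Finset.sum_congr rfl fun i _ => by rw [hTdef, Matrix.mul_smul]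
    rw [this, hRcS]
  have hahatT : ∀ ω, ahat ω = ∑ i, T i *ᵥ a i ω := by
    intro ω
    rw [hahat, mvec_sum]
    refine Finset.sum_congr rfl fun i _ => ?_
    rw [Matrix.mulVec_smul, Matrix.mulVec_mulVec, hTdef, Matrix.smul_mulVec]
  -- unbiasedness
  have hintT : ∀ (i : Fin p) (c : Fin n),
      Integrable (fun ω => ∑ d, T i c d * a i ω d) :=
    fun i c => integrable_finset_sum _ fun d _ => (hint i d).const_mul _
  have hub : ∀ c, (∫ ω, ahat ω c) = α c := by
    intro c
    have h1 : (fun ω => ahat ω c) = fun ω => ∑ i, ∑ d, T i c d * a i ω d := by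
      funext ω
      rw [hahatT ω]
      simp [Matrix.mulVec, dotProduct]
    rw [h1, integral_finset_sum _ fun i _ => hintT i c]
    have h2 : ∀ i : Fin p, (∫ ω, ∑ d, T i c d * a i ω d) = ∑ d, T i c d * α d := by
      intro i
      rw [integral_finset_sum _ fun d _ => (hint i d).const_mul _]
      exact Finset.sum_congr rfl fun d _ => by rw [integral_const_mul, hmean]
    calc (∑ i, ∫ ω, ∑ d, T i c d * a i ω d) = ∑ i, ∑ d, T i c d * α d :=
          Finset.sum_congr rfl fun i _ => h2 i
      _ = ((∑ i, T i) *ᵥ α) c := by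
          rw [msum_mulVec]
          simp [Matrix.mulVec, dotProduct]
      _ = α c := by rw [hTsum, Matrix.one_mulVec]
  refine ⟨hub, ?_⟩
  -- the centered vectors
  set b : Ω → Fin n → ℝ := fun ω c => ahat ω c - α c with hbdef
  have hbT : ∀ ω, b ω = ∑ i, T i *ᵥ (fun c => a i ω c - α c) := by
    intro ω
    have hstep : b ω = (∑ i, T i *ᵥ a i ω) - (∑ i, T i *ᵥ α) := by
      funext c
      show ahat ω c - α c = _
      simp only [Pi.sub_apply]
      congr 1
      · rw [hahatT ω]
      · rw [← msum_mulVec, hTsum, Matrix.one_mulVec]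
    rw [hstep, ← Finset.sum_sub_distrib]
    refine Finset.sum_congr rfl fun i _ => ?_
    rw [← Matrix.mulVec_sub]
    rfl
  -- integrability of products of entries of b
  have hbb : ∀ c d, Integrable (fun ω => b ω c * b ω d) := by
    have hflat : ∀ ω c, b ω c = ∑ q : Fin p × Fin n, T q.1 c q.2 * (a q.1 ω q.2 - α q.2) := by
      intro ω c
      rw [hbT ω, Finset.sum_apply, Fintype.sum_prod_type]
      refine Finset.sum_congr rfl fun i _ => ?_
      simp [Matrix.mulVec, dotProduct]
    intro c d
    have h : (fun ω => b ω c * b ω d) = fun ω => ∑ q : Fin p × Fin n, ∑ r : Fin p × Fin n,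
        (T q.1 c q.2 * T r.1 d r.2) * ((a q.1 ω q.2 - α q.2) * (a r.1 ω r.2 - α r.2)) := by
      funext ω
      rw [hflat ω c, hflat ω d, Finset.sum_mul_sum]
      exact Finset.sum_congr rfl fun q _ => Finset.sum_congr rfl fun r _ => by ring
    rw [h]
    exact integrable_finset_sum _ fun q _ => integrable_finset_sum _ fun r _ =>
      (hint2 q.1 r.1 q.2 r.2).const_mul _
  -- set up the quadratic form argument
  set P : Matrix (Fin n) (Fin n) ℝ :=
    Matrix.of (fun c d => ∫ ω, (ahat ω c - α c) * (ahat ω d - α d)) with hPdef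
  have hPapply : ∀ c d, P c d = ∫ ω, b ω c * b ω d := fun c d => rfl
  have hPherm : P.IsHermitian := by
    unfold Matrix.IsHermitian
    ext c d
    rw [Matrix.conjTranspose_apply, star_trivial, hPapply, hPapply]
    exact integral_congr_ae (Filter.Eventually.of_forall fun ω => mul_comm _ _)
  refine Matrix.PosSemidef.of_dotProduct_mulVec_nonneg ?_ ?_
  · exact Matrix.IsHermitian.sub hRcherm hPherm
  intro x
  rw [star_trivial, Matrix.sub_mulVec, dotProduct_sub, sub_nonneg]
  -- vectors and scalar random variables
  set v : Fin n → ℝ := Rc *ᵥ x with hvdef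
  set y : Fin p → Fin n → ℝ := fun i => (R i)⁻¹ *ᵥ v with hydef
  set z : Fin p → Ω → ℝ := fun i ω => y i ⬝ᵥ (fun c => a i ω c - α c) with hzdef
  -- the key pointwise identity
  have hgz : ∀ ω, x ⬝ᵥ b ω = ∑ i, w i * z i ω := by
    intro ω
    rw [hbT ω, dot_sum]
    refine Finset.sum_congr rfl fun i _ => ?_
    rw [hTdef]
    simp only
    rw [Matrix.smul_mulVec, dotProduct_smul, smul_eq_mul]
    congr 1
    rw [← Matrix.mulVec_mulVec, herm_dot_swap hRcherm, herm_dot_swap (hRinvpd i).isHermitian]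
  -- integrability of products of the z's
  have hzz : ∀ i j, Integrable (fun ω => z i ω * z j ω) := by
    intro i j
    have h : (fun ω => z i ω * z j ω) = fun ω => ∑ c, ∑ d,
        (y i c * y j d) * ((a i ω c - α c) * (a j ω d - α d)) := by
      funext ω
      rw [hzdef]
      simp only [dotProduct]
      rw [Finset.sum_mul_sum]
      exact Finset.sum_congr rfl fun c _ => Finset.sum_congr rfl fun d _ => by ring
    rw [h]
    exact integrable_finset_sum _ fun c _ => integrable_finset_sum _ fun d _ =>
      (hint2 i j c d).const_mul _
  -- second moments of the z's
  have hz2 : ∀ i, (∫ ω, z i ω * z i ω) = y i ⬝ᵥ (Rt i *ᵥ y i) := by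
    intro i
    have h : (fun ω => z i ω * z i ω) = fun ω => ∑ c, ∑ d,
        (y i c * y i d) * ((a i ω c - α c) * (a i ω d - α d)) := by
      funext ω
      rw [hzdef]
      simp only [dotProduct]
      rw [Finset.sum_mul_sum]
      exact Finset.sum_congr rfl fun c _ => Finset.sum_congr rfl fun d _ => by ring
    rw [h, integral_finset_sum _ fun c _ =>
      integrable_finset_sum _ fun d _ => (hint2 i i c d).const_mul _]
    have : ∀ c : Fin n, (∫ ω, ∑ d, (y i c * y i d) * ((a i ω c - α c) * (a i ω d - α d)))
        = ∑ d, (y i c * y i d) * (Rt i c d) := by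
      intro c
      rw [integral_finset_sum _ fun d _ => (hint2 i i c d).const_mul _]
      refine Finset.sum_congr rfl fun d _ => ?_
      rw [integral_const_mul, hRt i]
      rfl
    rw [Finset.sum_congr rfl fun c _ => this c]
    simp only [dotProduct, Matrix.mulVec, Finset.mul_sum]
    exact Finset.sum_congr rfl fun c _ => Finset.sum_congr rfl fun d _ => by ring
  -- the quadratic form of P as an integral
  have hPquad : x ⬝ᵥ (P *ᵥ x) = ∫ ω, (∑ i, w i * z i ω) * (∑ i, w i * z i ω) := by
    have h1 : x ⬝ᵥ (P *ᵥ x) = ∑ c, ∑ d, (x c * x d) * (∫ ω, b ω c * b ω d) := by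
      simp only [dotProduct, Matrix.mulVec, Finset.mul_sum]
      exact Finset.sum_congr rfl fun c _ => Finset.sum_congr rfl fun d _ => by
        rw [hPapply]; ring
    have h2 : ∀ c d, (x c * x d) * (∫ ω, b ω c * b ω d)
        = ∫ ω, (x c * x d) * (b ω c * b ω d) := fun c d => (integral_const_mul _ _).symm
    rw [h1]
    rw [Finset.sum_congr rfl fun c _ => Finset.sum_congr rfl fun d _ => h2 c d]
    have h3 : ∀ c : Fin n, (∑ d, ∫ ω, (x c * x d) * (b ω c * b ω d))
        = ∫ ω, ∑ d, (x c * x d) * (b ω c * b ω d) := fun c =>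
      (integral_finset_sum _ fun d _ => (hbb c d).const_mul _).symm
    rw [Finset.sum_congr rfl fun c _ => h3 c,
      ← integral_finset_sum _ fun c _ =>
        integrable_finset_sum _ fun d _ => (hbb c d).const_mul _]
    refine integral_congr_ae (Filter.Eventually.of_forall fun ω => ?_)
    show (∑ c, ∑ d, x c * x d * (b ω c * b ω d))
        = (∑ i, w i * z i ω) * ∑ i, w i * z i ω
    rw [← hgz ω]
    simp only [dotProduct]
    rw [Finset.sum_mul_sum]
    exact Finset.sum_congr rfl fun c _ => Finset.sum_congr rfl fun d _ => by ring
  -- pointwise Cauchy-Schwarz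
  have hcs : ∀ ω, (∑ i, w i * z i ω) * (∑ i, w i * z i ω) ≤ ∑ i, w i * (z i ω * z i ω) := by
    intro ω
    have h := Finset.sum_sq_le_sum_mul_sum_of_sq_eq_mul Finset.univ
      (r := fun i => w i * z i ω) (f := fun i => w i)
      (g := fun i => w i * (z i ω * z i ω))
      (fun i _ => (hw i).le)
      (fun i _ => mul_nonneg (hw i).le (mul_self_nonneg _))
      (fun i _ => by ring)
    rw [hw1, one_mul] at h
    calc (∑ i, w i * z i ω) * (∑ i, w i * z i ω) = (∑ i, w i * z i ω) ^ 2 := by ring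
      _ ≤ _ := h
  -- integrate
  have hintg : Integrable (fun ω => (∑ i, w i * z i ω) * (∑ i, w i * z i ω)) := by
    have h : (fun ω => (∑ i, w i * z i ω) * (∑ i, w i * z i ω))
        = fun ω => ∑ i, ∑ j, (w i * w j) * (z i ω * z j ω) := by
      funext ω
      rw [Finset.sum_mul_sum]
      exact Finset.sum_congr rfl fun i _ => Finset.sum_congr rfl fun j _ => by ring
    rw [h]
    exact integrable_finset_sum _ fun i _ => integrable_finset_sum _ fun j _ =>
      (hzz i j).const_mul _
  have hstep1 : x ⬝ᵥ (P *ᵥ x) ≤ ∑ i, w i * (y i ⬝ᵥ (Rt i *ᵥ y i)) := by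
    rw [hPquad]
    calc (∫ ω, (∑ i, w i * z i ω) * (∑ i, w i * z i ω))
        ≤ ∫ ω, ∑ i, w i * (z i ω * z i ω) := by
          refine integral_mono hintg ?_ hcs
          exact integrable_finset_sum _ fun i _ => (hzz i i).const_mul _
      _ = ∑ i, w i * (∫ ω, z i ω * z i ω) := by
          rw [integral_finset_sum _ fun i _ => (hzz i i).const_mul _]
          exact Finset.sum_congr rfl fun i _ => integral_const_mul _ _
      _ = ∑ i, w i * (y i ⬝ᵥ (Rt i *ᵥ y i)) :=
          Finset.sum_congr rfl fun i _ => by rw [hz2 i]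
  have hstep2 : (∑ i, w i * (y i ⬝ᵥ (Rt i *ᵥ y i))) ≤ ∑ i, w i * (y i ⬝ᵥ (R i *ᵥ y i)) := by
    refine Finset.sum_le_sum fun i _ => ?_
    refine mul_le_mul_of_nonneg_left ?_ (hw i).le
    have h := (hcons i).dotProduct_mulVec_nonneg (y i)
    rw [star_trivial, Matrix.sub_mulVec, dotProduct_sub, sub_nonneg] at h
    exact h
  have hstep3 : (∑ i, w i * (y i ⬝ᵥ (R i *ᵥ y i))) = x ⬝ᵥ (Rc *ᵥ x) := by
    have h1 : ∀ i, y i ⬝ᵥ (R i *ᵥ y i) = v ⬝ᵥ ((R i)⁻¹ *ᵥ v) := by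
      intro i
      have : R i *ᵥ y i = v := by
        rw [hydef]
        simp only
        rw [Matrix.mulVec_mulVec, Matrix.mul_nonsing_inv _ (hRpd i).det_pos.ne'.isUnit,
          Matrix.one_mulVec]
      rw [this, hydef]
      simp only
      rw [dotProduct_comm]
    rw [Finset.sum_congr rfl fun i _ => by rw [h1 i]]
    have h2 : (∑ i, w i * (v ⬝ᵥ ((R i)⁻¹ *ᵥ v))) = v ⬝ᵥ (S *ᵥ v) := by
      rw [hSdef, msum_mulVec, dot_sum]
      exact Finset.sum_congr rfl fun i _ => by
        rw [Matrix.smul_mulVec, dotProduct_smul, smul_eq_mul]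
    rw [h2, hvdef]
    have h3 : S *ᵥ (Rc *ᵥ x) = x := by
      rw [Matrix.mulVec_mulVec, hSRc, Matrix.one_mulVec]
    rw [h3]
    exact dotProduct_comm _ _
  calc x ⬝ᵥ (P *ᵥ x) ≤ ∑ i, w i * (y i ⬝ᵥ (Rt i *ᵥ y i)) := hstep1
    _ ≤ ∑ i, w i * (y i ⬝ᵥ (R i *ᵥ y i)) := hstep2
    _ = x ⬝ᵥ (Rc *ᵥ x) := hstep3
end

section
/- The DHIF posterior covariance is never larger than the KLA posterior covariance under equal weights: let Pⱼ ≻ 0, σⱼ > 0 with ∑_{j∈J} σⱼ = 1, and Sⱼ := Hⱼᵀ Rⱼ⁻¹ Hⱼ ⪰ 0. Then (∑ⱼ σⱼ Pⱼ⁻¹ + ∑ⱼ Sⱼ)⁻¹ ⪯ (∑ⱼ σⱼ (Pⱼ⁻¹ + Sⱼ))⁻¹, since ∑ⱼ Sⱼ ⪰ ∑ⱼ σⱼ Sⱼ. -/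
open Matrix

variable {n : ℕ}

lemma psd_smul {M : Matrix (Fin n) (Fin n) ℝ} (hM : M.PosSemidef) {c : ℝ} (hc : 0 ≤ c) :
    (c • M).PosSemidef := by
  refine ⟨?_, fun x => ?_⟩
  · unfold Matrix.IsHermitian
    rw [conjTranspose_smul, hM.1.eq]
    simp
  · exact (hM.smul hc).2 x

lemma pd_smul {M : Matrix (Fin n) (Fin n) ℝ} (hM : M.PosDef) {c : ℝ} (hc : 0 < c) :
    (c • M).PosDef := by
  refine ⟨?_, fun x hx => ?_⟩
  · unfold Matrix.IsHermitian
    rw [conjTranspose_smul, hM.1.eq]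
    simp
  · exact (hM.smul hc).2 hx

lemma psd_sum {ι : Type*} (s : Finset ι) (f : ι → Matrix (Fin n) (Fin n) ℝ)
    (hf : ∀ j ∈ s, (f j).PosSemidef) : (∑ j ∈ s, f j).PosSemidef := by
  classical
  exact Finset.sum_induction f _ (fun a b ha hb => ha.add hb) Matrix.PosSemidef.zero hf

lemma one_sub_inv_psd {M : Matrix (Fin n) (Fin n) ℝ} (hM : M.PosSemidef)
    (hdet : IsUnit M.det) (h1 : (M - 1).PosSemidef) : ((1 : Matrix (Fin n) (Fin n) ℝ) - M⁻¹).PosSemidef := by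
  have hMi : M⁻¹.PosSemidef := hM.inv
  obtain ⟨U, hU, hUU⟩ : ∃ U : Matrix (Fin n) (Fin n) ℝ, U.PosSemidef ∧ U * U = M⁻¹ :=
    by open scoped MatrixOrder in exact ⟨CFC.sqrt M⁻¹, (CFC.sqrt_nonneg _).posSemidef, CFC.sqrt_mul_sqrt_self _ hMi.nonneg⟩
  have hdetU : IsUnit U.det := by
    have : U.det * U.det = M⁻¹.det := by rw [← det_mul, hUU]
    rw [det_nonsing_inv] at this
    have h0 : M.det ≠ 0 := hdet.ne_zero
    refine isUnit_iff_ne_zero.mpr (fun hz => ?_)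
    rw [hz, zero_mul] at this
    exact h0 (by
      have := this.symm
      simpa using this)
  have hMinv : M = U⁻¹ * U⁻¹ := by
    calc M = M⁻¹⁻¹ := (Matrix.nonsing_inv_nonsing_inv M hdet).symm
    _ = (U * U)⁻¹ := by rw [hUU]
    _ = U⁻¹ * U⁻¹ := Matrix.mul_inv_rev U U
  have key : U * (M - 1) * Uᴴ = 1 - M⁻¹ := by
    rw [hU.1]
    rw [Matrix.mul_sub, Matrix.sub_mul, Matrix.mul_one, hUU]
    congr 1
    calc U * M * U = U * (U⁻¹ * U⁻¹) * U := by rw [← hMinv]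
    _ = (U * U⁻¹) * (U⁻¹ * U) := by rw [← Matrix.mul_assoc, Matrix.mul_assoc (U * U⁻¹)]
    _ = 1 := by rw [Matrix.mul_nonsing_inv U hdetU, Matrix.nonsing_inv_mul U hdetU, one_mul]
  have := h1.mul_mul_conjTranspose_same U
  rwa [key] at this

lemma inv_sub_inv_psd {A B : Matrix (Fin n) (Fin n) ℝ} (hA : A.PosDef) (hB : B.PosDef)
    (h : (B - A).PosSemidef) : (A⁻¹ - B⁻¹).PosSemidef := by
  have hAi : A⁻¹.PosDef := hA.inv
  obtain ⟨T, hT, hTT⟩ : ∃ T : Matrix (Fin n) (Fin n) ℝ, T.PosSemidef ∧ T * T = A⁻¹ :=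
    by open scoped MatrixOrder in exact ⟨CFC.sqrt A⁻¹, (CFC.sqrt_nonneg _).posSemidef, CFC.sqrt_mul_sqrt_self _ hAi.posSemidef.nonneg⟩
  have hdetA : IsUnit A.det := isUnit_iff_ne_zero.mpr hA.det_pos.ne'
  have hdetB : IsUnit B.det := isUnit_iff_ne_zero.mpr hB.det_pos.ne'
  have hdetT : IsUnit T.det := by
    have h2 : T.det * T.det = A⁻¹.det := by rw [← det_mul, hTT]
    refine isUnit_iff_ne_zero.mpr (fun hz => ?_)
    rw [hz, zero_mul] at h2
    exact hAi.det_pos.ne' h2.symm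
  have hAinv : A = T⁻¹ * T⁻¹ := by
    calc A = A⁻¹⁻¹ := (Matrix.nonsing_inv_nonsing_inv A hdetA).symm
    _ = (T * T)⁻¹ := by rw [hTT]
    _ = T⁻¹ * T⁻¹ := Matrix.mul_inv_rev T T
  have hTAT : T * A * T = 1 := by
    calc T * A * T = T * (T⁻¹ * T⁻¹) * T := by rw [← hAinv]
    _ = (T * T⁻¹) * (T⁻¹ * T) := by rw [← Matrix.mul_assoc, Matrix.mul_assoc (T * T⁻¹)]
    _ = 1 := by rw [Matrix.mul_nonsing_inv T hdetT, Matrix.nonsing_inv_mul T hdetT, one_mul]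
  set M := T * B * T with hMdef
  have hMpsd : M.PosSemidef := by
    have := hB.posSemidef.mul_mul_conjTranspose_same T
    rwa [hT.1] at this
  have hdetM : IsUnit M.det := by
    rw [hMdef, det_mul, det_mul]
    exact (hdetT.mul hdetB).mul hdetT
  have hM1 : (M - 1).PosSemidef := by
    have h2 : T * (B - A) * Tᴴ = M - 1 := by
      rw [hT.1, Matrix.mul_sub, Matrix.sub_mul, hTAT, hMdef]
    have := h.mul_mul_conjTranspose_same T
    rwa [h2] at this
  have hsub := one_sub_inv_psd hMpsd hdetM hM1
  have hMi : M⁻¹ = T⁻¹ * B⁻¹ * T⁻¹ := by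
    rw [hMdef, Matrix.mul_inv_rev, Matrix.mul_inv_rev]
    rw [Matrix.mul_assoc]
  have hfin : T * (1 - M⁻¹) * Tᴴ = A⁻¹ - B⁻¹ := by
    rw [hT.1, Matrix.mul_sub, Matrix.sub_mul, Matrix.mul_one, hTT, hMi]
    congr 1
    calc T * (T⁻¹ * B⁻¹ * T⁻¹) * T = (T * T⁻¹) * B⁻¹ * (T⁻¹ * T) := by
          rw [← Matrix.mul_assoc, ← Matrix.mul_assoc, Matrix.mul_assoc (T * T⁻¹ * B⁻¹)]
    _ = B⁻¹ := by rw [Matrix.mul_nonsing_inv T hdetT, Matrix.nonsing_inv_mul T hdetT, one_mul, Matrix.mul_one]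
  have := hsub.mul_mul_conjTranspose_same T
  rwa [hfin] at this


theorem stmt_7 {n q : ℕ} (m : Fin q → ℕ)
    (P : Fin q → Matrix (Fin n) (Fin n) ℝ)
    (hP : ∀ j, (P j).PosDef)
    (σ : Fin q → ℝ) (hσ : ∀ j, 0 < σ j) (hσ1 : ∑ j, σ j = 1)
    (H : ∀ j : Fin q, Matrix (Fin (m j)) (Fin n) ℝ)
    (R : ∀ j : Fin q, Matrix (Fin (m j)) (Fin (m j)) ℝ)
    (hR : ∀ j, (R j).PosDef)
    (S : Fin q → Matrix (Fin n) (Fin n) ℝ)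
    (hSdef : ∀ j, S j = (H j)ᵀ * (R j)⁻¹ * H j) :
    ((∑ j, σ j • ((P j)⁻¹ + S j))⁻¹
      - ((∑ j, σ j • (P j)⁻¹) + ∑ j, S j)⁻¹).PosSemidef := by
  have hne : Nonempty (Fin q) := by
    rcases Nat.eq_zero_or_pos q with h | h
    · subst h; simp at hσ1
    · exact ⟨⟨0, h⟩⟩
  have hS : ∀ j, (S j).PosSemidef := by
    intro j
    rw [hSdef j]
    have hHt : (H j)ᵀ = (H j)ᴴ := by
      ext i k
      simp [Matrix.conjTranspose_apply]
    rw [hHt]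
    exact ((hR j).inv.posSemidef).conjTranspose_mul_mul_same (H j)
  obtain ⟨j0⟩ := hne
  have hApd : (∑ j, σ j • ((P j)⁻¹ + S j)).PosDef := by
    rw [← Finset.add_sum_erase _ _ (Finset.mem_univ j0)]
    refine ((pd_smul ((hP j0).inv.add_posSemidef (hS j0)) (hσ j0))).add_posSemidef ?_
    exact psd_sum _ _ (fun j _ => psd_smul ((hP j).inv.posSemidef.add (hS j)) (hσ j).le)
  have hBpd : ((∑ j, σ j • (P j)⁻¹) + ∑ j, S j).PosDef := by
    have h1 : (∑ j, σ j • (P j)⁻¹).PosDef := by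
      rw [← Finset.add_sum_erase _ _ (Finset.mem_univ j0)]
      refine (pd_smul (hP j0).inv (hσ j0)).add_posSemidef ?_
      exact psd_sum _ _ (fun j _ => psd_smul (hP j).inv.posSemidef (hσ j).le)
    exact h1.add_posSemidef (psd_sum _ _ (fun j _ => hS j))
  have hdiff : (((∑ j, σ j • (P j)⁻¹) + ∑ j, S j) - ∑ j, σ j • ((P j)⁻¹ + S j)).PosSemidef := by
    have heq : ((∑ j, σ j • (P j)⁻¹) + ∑ j, S j) - ∑ j, σ j • ((P j)⁻¹ + S j)
        = ∑ j, (1 - σ j) • S j := by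
      simp only [smul_add, Finset.sum_add_distrib, sub_smul, one_smul, Finset.sum_sub_distrib]
      abel
    rw [heq]
    refine psd_sum _ _ (fun j _ => psd_smul (hS j) ?_)
    have hle : σ j ≤ 1 := by
      calc σ j ≤ ∑ i, σ i := Finset.single_le_sum (fun i _ => (hσ i).le) (Finset.mem_univ j)
      _ = 1 := hσ1
    linarith
  exact inv_sub_inv_psd hApd hBpd hdiff
end

section
/- The conclusion of the previous lemma extends to inhomogeneous products: if D₁, D₂, … all belong to the family of stochastic matrices induced by D (same zero/positive pattern as D, row sums 1, positive entries bounded below by a common ω̲ > 0), then there exists k̄ such that for all k ≥ k̄, any product D_k D_{k−1} ⋯ D₁ of k such matrices has (product)_{(i,j)} > 0 for all i ∈ 𝒱 and j ∈ ℛ. -/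
open Matrix

/-- Edge relation of the graph associated with a stochastic matrix `D`. -/
def edgeRel {N : ℕ} (D : Matrix (Fin N) (Fin N) ℝ) (i j : Fin N) : Prop :=
  0 < D j i

/-- Backward product `Ds k * Ds (k-1) * ⋯ * Ds 1` of an inhomogeneous
sequence of matrices. -/
def backProd {N : ℕ} (Ds : ℕ → Matrix (Fin N) (Fin N) ℝ) : ℕ → Matrix (Fin N) (Fin N) ℝ
  | 0 => 1
  | k + 1 => Ds (k + 1) * backProd Ds k

lemma sum_pos_iff_aux {N : ℕ} {f : Fin N → ℝ} (h : ∀ l, 0 ≤ f l) :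
    0 < ∑ l, f l ↔ ∃ l, 0 < f l := by
  constructor
  · intro hs
    by_contra hc
    push_neg at hc
    have h0 : ∑ l, f l = 0 :=
      le_antisymm (Finset.sum_nonpos fun l _ => hc l) (Finset.sum_nonneg fun l _ => h l)
    linarith
  · rintro ⟨l, hl⟩
    exact Finset.sum_pos' (fun i _ => h i) ⟨l, Finset.mem_univ l, hl⟩

lemma mul_pos_iff_aux {a b : ℝ} (ha : 0 ≤ a) (hb : 0 ≤ b) : 0 < a * b ↔ 0 < a ∧ 0 < b := by
  constructor
  · intro h
    constructor
    · rcases ha.lt_or_eq with h1 | h1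
      · exact h1
      · exfalso; rw [← h1, zero_mul] at h; exact lt_irrefl 0 h
    · rcases hb.lt_or_eq with h1 | h1
      · exact h1
      · exfalso; rw [← h1, mul_zero] at h; exact lt_irrefl 0 h
  · rintro ⟨h1, h2⟩; exact mul_pos h1 h2

lemma pow_entry_nonneg {N : ℕ} (D : Matrix (Fin N) (Fin N) ℝ)
    (hnonneg : ∀ i j, 0 ≤ D i j) : ∀ k i j, 0 ≤ (D ^ k) i j := by
  intro k
  induction k with
  | zero => intro i j; simp [Matrix.one_apply]; split_ifs <;> norm_num
  | succ k ih =>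
    intro i j
    rw [pow_succ, Matrix.mul_apply]
    exact Finset.sum_nonneg fun l _ => mul_nonneg (ih i l) (hnonneg l j)

lemma backProd_entry_nonneg {N : ℕ} (Ds : ℕ → Matrix (Fin N) (Fin N) ℝ)
    (h : ∀ t i j, 0 ≤ Ds t i j) : ∀ k i j, 0 ≤ backProd Ds k i j := by
  intro k
  induction k with
  | zero => intro i j; simp [backProd, Matrix.one_apply]; split_ifs <;> norm_num
  | succ k ih =>
    intro i j
    show 0 ≤ (Ds (k + 1) * backProd Ds k) i j
    rw [Matrix.mul_apply]
    exact Finset.sum_nonneg fun l _ => mul_nonneg (h _ i l) (ih l j)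

lemma backProd_pos_iff {N : ℕ} (D : Matrix (Fin N) (Fin N) ℝ)
    (hnonneg : ∀ i j, 0 ≤ D i j)
    (Ds : ℕ → Matrix (Fin N) (Fin N) ℝ)
    (hDs : ∀ t i j, 0 ≤ Ds t i j)
    (hpat : ∀ t i j, 0 < Ds t i j ↔ 0 < D i j) :
    ∀ k i j, 0 < backProd Ds k i j ↔ 0 < (D ^ k) i j := by
  intro k
  induction k with
  | zero => intro i j; simp [backProd]
  | succ k ih =>
    intro i j
    have h1 : backProd Ds (k + 1) i j = ∑ l, Ds (k + 1) i l * backProd Ds k l j := by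
      show (Ds (k + 1) * backProd Ds k) i j = _
      rw [Matrix.mul_apply]
    have h2 : (D ^ (k + 1)) i j = ∑ l, D i l * (D ^ k) l j := by
      rw [pow_succ', Matrix.mul_apply]
    rw [h1, h2]
    rw [sum_pos_iff_aux (fun l => mul_nonneg (hDs _ i l) (backProd_entry_nonneg Ds hDs k l j)),
      sum_pos_iff_aux (fun l => mul_nonneg (hnonneg i l) (pow_entry_nonneg D hnonneg k l j))]
    constructor
    · rintro ⟨l, hl⟩
      rw [mul_pos_iff_aux (hDs _ i l) (backProd_entry_nonneg Ds hDs k l j)] at hl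
      exact ⟨l, mul_pos ((hpat _ i l).mp hl.1) ((ih l j).mp hl.2)⟩
    · rintro ⟨l, hl⟩
      rw [mul_pos_iff_aux (hnonneg i l) (pow_entry_nonneg D hnonneg k l j)] at hl
      exact ⟨l, mul_pos ((hpat _ i l).mpr hl.1) ((ih l j).mpr hl.2)⟩

lemma reach_pow_aux {N : ℕ} (D : Matrix (Fin N) (Fin N) ℝ)
    (hnonneg : ∀ i j, 0 ≤ D i j) {a b : Fin N}
    (h : Relation.ReflTransGen (edgeRel D) a b) :
    ∃ k, 0 < (D ^ k) b a := by
  induction h with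
  | refl => exact ⟨0, by simp [Matrix.one_apply]⟩
  | @tail b c h1 h2 ih =>
    obtain ⟨k, hk⟩ := ih
    refine ⟨k + 1, ?_⟩
    rw [pow_succ', Matrix.mul_apply]
    exact Finset.sum_pos'
      (fun l _ => mul_nonneg (hnonneg c l) (pow_entry_nonneg D hnonneg k l a))
      ⟨b, Finset.mem_univ b, mul_pos h2 hk⟩

lemma pow_pos_mono {N : ℕ} (D : Matrix (Fin N) (Fin N) ℝ)
    (hnonneg : ∀ i j, 0 ≤ D i j) (hdiag : ∀ i, 0 < D i i)
    {i j : Fin N} {k : ℕ} (hk : 0 < (D ^ k) i j) :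
    ∀ m, k ≤ m → 0 < (D ^ m) i j := by
  intro m hm
  induction m, hm using Nat.le_induction with
  | base => exact hk
  | succ m hm ih =>
    rw [pow_succ', Matrix.mul_apply]
    exact Finset.sum_pos'
      (fun l _ => mul_nonneg (hnonneg i l) (pow_entry_nonneg D hnonneg m l j))
      ⟨i, Finset.mem_univ i, mul_pos (hdiag i) ih⟩

theorem stmt_9 {N : ℕ} (D : Matrix (Fin N) (Fin N) ℝ)
    (R B : Finset (Fin N)) (ωlb : ℝ) (hωlb : 0 < ωlb)
    (hpart : ∀ i, i ∈ R ∨ i ∈ B) (hdisj : Disjoint R B)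
    (hnonneg : ∀ i j, 0 ≤ D i j)
    (hrow : ∀ i, ∑ j, D i j = 1)
    (hdiag : ∀ i, 0 < D i i)
    (hSC : ∀ i ∈ R, ∀ j ∈ R,
      Relation.ReflTransGen (fun a b => a ∈ R ∧ b ∈ R ∧ edgeRel D a b) i j)
    (hreach : ∀ b ∈ B, ∃ r ∈ R, Relation.ReflTransGen (edgeRel D) r b)
    (hnoback : ∀ i ∈ R, ∀ j ∈ B, D i j = 0) :
    ∃ kbar : ℕ, ∀ k ≥ kbar,
      ∀ Ds : ℕ → Matrix (Fin N) (Fin N) ℝ,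
        (∀ t i j, 0 ≤ Ds t i j) →
        (∀ t i, ∑ j, Ds t i j = 1) →
        (∀ t i j, 0 < Ds t i j ↔ 0 < D i j) →
        (∀ t i j, 0 < D i j → ωlb ≤ Ds t i j) →
        ∀ i : Fin N, ∀ j ∈ R, 0 < backProd Ds k i j := by
  classical
  -- For every i and j ∈ R there is a walk from j to i, hence some power is positive.
  have hex : ∀ i : Fin N, ∀ j ∈ R, ∃ k, 0 < (D ^ k) i j := by
    intro i j hj
    rcases hpart i with hi | hi
    · have h := hSC j hj i hi
      have h' : Relation.ReflTransGen (edgeRel D) j i :=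
        Relation.ReflTransGen.mono (fun a b hab => hab.2.2) j i h
      exact reach_pow_aux D hnonneg h'
    · obtain ⟨r, hr, hri⟩ := hreach i hi
      have hjr : Relation.ReflTransGen (edgeRel D) j r :=
        Relation.ReflTransGen.mono (fun a b hab => hab.2.2) j r (hSC j hj r hr)
      exact reach_pow_aux D hnonneg (hjr.trans hri)
  set K : Fin N × Fin N → ℕ := fun p =>
    if h : ∃ k, 0 < (D ^ k) p.1 p.2 then Nat.find h else 0 with hK
  refine ⟨Finset.sup Finset.univ K, ?_⟩
  intro k hk Ds hDsnn hDsrow hDspat hDslb i j hj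
  have hpow : 0 < (D ^ k) i j := by
    have h := hex i j hj
    have hKle : K (i, j) ≤ k :=
      le_trans (Finset.le_sup (Finset.mem_univ (i, j))) hk
    rw [hK] at hKle
    simp only [dif_pos h] at hKle
    exact pow_pos_mono D hnonneg hdiag (Nat.find_spec h) k hKle
  exact (backProd_pos_iff D hnonneg Ds hDsnn hDspat k i j).mpr hpow
end

section
/- Two-source CI consistency (scalar weights, two estimates): let e₁, e₂ be zero-mean random vectors with E[eᵢeᵢᵀ] ⪯ Rᵢ and Rᵢ ≻ 0, and let ω ∈ (0,1). Define P := (ω R₁⁻¹ + (1−ω) R₂⁻¹)⁻¹ and e := P(ω R₁⁻¹ e₁ + (1−ω) R₂⁻¹ e₂). Then E[e eᵀ] ⪯ P, regardless of the (unknown) cross-covariance E[e₁e₂ᵀ]. -/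
open Matrix MeasureTheory

lemma posdef_smul {n : ℕ} {c : ℝ} (hc : 0 < c) {M : Matrix (Fin n) (Fin n) ℝ}
    (hM : M.PosDef) : (c • M).PosDef := by
  refine posDef_iff_dotProduct_mulVec.mpr ⟨?_, fun x hx => ?_⟩
  · unfold Matrix.IsHermitian
    rw [conjTranspose_smul, hM.isHermitian.eq]
    simp
  · rw [smul_mulVec, dotProduct_smul, smul_eq_mul]
    exact mul_pos hc (hM.dotProduct_mulVec_pos hx)

-- second moment swap
lemma swap_lemma {n : ℕ} {Ω : Type*} [MeasureSpace Ω]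
    (f : Ω → Fin n → ℝ) (hf : ∀ a b, Integrable (fun ω => f ω a * f ω b))
    (y : Fin n → ℝ) :
    y ⬝ᵥ ((Matrix.of fun a b => ∫ ω, f ω a * f ω b) *ᵥ y) = ∫ ω, (y ⬝ᵥ f ω)^2 := by
  have step1 : y ⬝ᵥ ((Matrix.of fun a b => ∫ ω, f ω a * f ω b) *ᵥ y)
      = ∑ a, ∑ b, ∫ ω, y a * y b * (f ω a * f ω b) := by
    simp only [dotProduct, mulVec, Matrix.of_apply, Finset.mul_sum]
    refine Finset.sum_congr rfl fun a _ => Finset.sum_congr rfl fun b _ => ?_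
    rw [show y a * ((∫ ω, f ω a * f ω b) * y b) = (y a * y b) * ∫ ω, f ω a * f ω b by ring,
      ← integral_const_mul]
  rw [step1]
  have step2 : ∀ a, ∑ b, ∫ ω, y a * y b * (f ω a * f ω b)
      = ∫ ω, ∑ b, y a * y b * (f ω a * f ω b) := fun a =>
    (integral_finset_sum _ fun b _ => ((hf a b).const_mul _)).symm
  simp only [step2]
  rw [← integral_finset_sum _ fun a _ =>
    (integrable_finset_sum _ fun b _ => ((hf a b).const_mul _))]
  refine integral_congr_ae (Filter.Eventually.of_forall fun ω => ?_)
  show ∑ a, ∑ b, y a * y b * (f ω a * f ω b) = (y ⬝ᵥ f ω) ^ 2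
  rw [sq, dotProduct, Finset.sum_mul_sum]
  exact Finset.sum_congr rfl fun a _ => Finset.sum_congr rfl fun b _ => by ring

theorem stmt_12 {n : ℕ} {Ω : Type*} [MeasureSpace Ω]
    [IsProbabilityMeasure (volume : Measure Ω)]
    (e₁ e₂ : Ω → Fin n → ℝ)
    (hint1 : ∀ a, Integrable (fun ω => e₁ ω a))
    (hint2 : ∀ a, Integrable (fun ω => e₂ ω a))
    (hprod : ∀ (f g : Ω → Fin n → ℝ), (f = e₁ ∨ f = e₂) → (g = e₁ ∨ g = e₂) →
      ∀ a b, Integrable (fun ω => f ω a * g ω b))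
    (hmean1 : ∀ a, (∫ ω, e₁ ω a) = 0) (hmean2 : ∀ a, (∫ ω, e₂ ω a) = 0)
    (R₁ R₂ : Matrix (Fin n) (Fin n) ℝ)
    (hR₁ : R₁.PosDef) (hR₂ : R₂.PosDef)
    (hcons1 : (R₁ - Matrix.of fun a b => ∫ ω, e₁ ω a * e₁ ω b).PosSemidef)
    (hcons2 : (R₂ - Matrix.of fun a b => ∫ ω, e₂ ω a * e₂ ω b).PosSemidef)
    (w : ℝ) (hw : 0 < w) (hw1 : w < 1)
    (P : Matrix (Fin n) (Fin n) ℝ)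
    (hP : P = (w • R₁⁻¹ + (1 - w) • R₂⁻¹)⁻¹)
    (e : Ω → Fin n → ℝ)
    (he : ∀ ω, e ω = P *ᵥ (w • (R₁⁻¹ *ᵥ e₁ ω) + (1 - w) • (R₂⁻¹ *ᵥ e₂ ω))) :
    (P - Matrix.of fun a b => ∫ ω, e ω a * e ω b).PosSemidef := by
  have hw' : 0 < 1 - w := by linarith
  set S : Matrix (Fin n) (Fin n) ℝ := w • R₁⁻¹ + (1 - w) • R₂⁻¹ with hSdef
  have hS_pd : S.PosDef := (posdef_smul hw hR₁.inv).add (posdef_smul hw' hR₂.inv)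
  have hSdet : IsUnit S.det := isUnit_iff_ne_zero.mpr hS_pd.det_pos.ne'
  have hSP : S * P = 1 := by rw [hP]; exact mul_nonsing_inv S hSdet
  -- symmetry facts (over ℝ, conjTranspose = transpose)
  have hR1s : R₁⁻¹ᵀ = R₁⁻¹ := by
    rw [← conjTranspose_eq_transpose_of_trivial]; exact hR₁.inv.isHermitian.eq
  have hR2s : R₂⁻¹ᵀ = R₂⁻¹ := by
    rw [← conjTranspose_eq_transpose_of_trivial]; exact hR₂.inv.isHermitian.eq
  have hPs : Pᵀ = P := by
    rw [← conjTranspose_eq_transpose_of_trivial, hP]; exact hS_pd.inv.isHermitian.eq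
  -- dot-product decomposition of e
  have hdot : ∀ (α : Fin n → ℝ) ω,
      α ⬝ᵥ e ω = ((w • (R₁⁻¹ *ᵥ (P *ᵥ α))) ⬝ᵥ e₁ ω) + ((1 - w) • (R₂⁻¹ *ᵥ (P *ᵥ α))) ⬝ᵥ e₂ ω := by
    intro α ω
    rw [he ω, dotProduct_mulVec, ← mulVec_transpose, hPs, dotProduct_add,
      dotProduct_smul, dotProduct_smul, dotProduct_mulVec, ← mulVec_transpose, hR1s,
      dotProduct_mulVec, ← mulVec_transpose, hR2s, smul_dotProduct, smul_dotProduct]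
  -- integrability of products of dot products
  have hprodint : ∀ (f g : Ω → Fin n → ℝ), (f = e₁ ∨ f = e₂) → (g = e₁ ∨ g = e₂) →
      ∀ (α γ : Fin n → ℝ), Integrable (fun ω => (α ⬝ᵥ f ω) * (γ ⬝ᵥ g ω)) := by
    intro f g hf hg α γ
    have : (fun ω => (α ⬝ᵥ f ω) * (γ ⬝ᵥ g ω))
        = fun ω => ∑ c, ∑ d, α c * γ d * (f ω c * g ω d) := by
      funext ω
      rw [dotProduct, dotProduct, Finset.sum_mul_sum]
      exact Finset.sum_congr rfl fun c _ => Finset.sum_congr rfl fun d _ => by ring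
    rw [this]
    exact integrable_finset_sum _ fun c _ => integrable_finset_sum _ fun d _ =>
      ((hprod f g hf hg c d).const_mul _)
  have hint4 : ∀ (α β γ δ : Fin n → ℝ),
      Integrable (fun ω => (α ⬝ᵥ e₁ ω + β ⬝ᵥ e₂ ω) * (γ ⬝ᵥ e₁ ω + δ ⬝ᵥ e₂ ω)) := by
    intro α β γ δ
    have : (fun ω => (α ⬝ᵥ e₁ ω + β ⬝ᵥ e₂ ω) * (γ ⬝ᵥ e₁ ω + δ ⬝ᵥ e₂ ω))
        = fun ω => ((α ⬝ᵥ e₁ ω) * (γ ⬝ᵥ e₁ ω) + (α ⬝ᵥ e₁ ω) * (δ ⬝ᵥ e₂ ω))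
          + ((β ⬝ᵥ e₂ ω) * (γ ⬝ᵥ e₁ ω) + (β ⬝ᵥ e₂ ω) * (δ ⬝ᵥ e₂ ω)) := funext fun ω => by ring
    rw [this]
    exact (((hprodint e₁ e₁ (Or.inl rfl) (Or.inl rfl) α γ).add
      (hprodint e₁ e₂ (Or.inl rfl) (Or.inr rfl) α δ)).add
      ((hprodint e₂ e₁ (Or.inr rfl) (Or.inl rfl) β γ).add
      (hprodint e₂ e₂ (Or.inr rfl) (Or.inr rfl) β δ)))
  -- entrywise products of e are integrable
  have hsingle : ∀ (a : Fin n) ω, e ω a = (Pi.single a 1 : Fin n → ℝ) ⬝ᵥ e ω := by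
    intro a ω
    simp [dotProduct, Pi.single_apply, Finset.sum_ite_eq]
  have heint : ∀ a b, Integrable (fun ω => e ω a * e ω b) := by
    intro a b
    have : (fun ω => e ω a * e ω b) = fun ω =>
        ((w • (R₁⁻¹ *ᵥ (P *ᵥ Pi.single a 1))) ⬝ᵥ e₁ ω
          + ((1 - w) • (R₂⁻¹ *ᵥ (P *ᵥ Pi.single a 1))) ⬝ᵥ e₂ ω)
        * ((w • (R₁⁻¹ *ᵥ (P *ᵥ Pi.single b 1))) ⬝ᵥ e₁ ω
          + ((1 - w) • (R₂⁻¹ *ᵥ (P *ᵥ Pi.single b 1))) ⬝ᵥ e₂ ω) := by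
      funext ω
      rw [hsingle a ω, hsingle b ω, hdot, hdot]
    rw [this]
    exact hint4 _ _ _ _
  -- the Hermitian part
  have herm : (P - Matrix.of fun a b => ∫ ω, e ω a * e ω b).IsHermitian := by
    have hC : (Matrix.of fun a b => ∫ ω, e ω a * e ω b)ᵀ
        = (Matrix.of fun a b => ∫ ω, e ω a * e ω b) := by
      ext a b
      simp only [transpose_apply, Matrix.of_apply]
      exact integral_congr_ae (Filter.Eventually.of_forall fun ω => mul_comm _ _)
    unfold Matrix.IsHermitian
    rw [conjTranspose_sub]
    rw [conjTranspose_eq_transpose_of_trivial, conjTranspose_eq_transpose_of_trivial, hPs, hC]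
  refine posSemidef_iff_dotProduct_mulVec.mpr ⟨herm, fun x => ?_⟩
  have hstar : (star x : Fin n → ℝ) = x := by simp
  rw [hstar, sub_mulVec, dotProduct_sub]
  -- definitions
  set z : Fin n → ℝ := P *ᵥ x with hz
  set y₁ : Fin n → ℝ := R₁⁻¹ *ᵥ z with hy₁
  set y₂ : Fin n → ℝ := R₂⁻¹ *ᵥ z with hy₂
  -- quadratic form of C_e
  have hCe : x ⬝ᵥ ((Matrix.of fun a b => ∫ ω, e ω a * e ω b) *ᵥ x) = ∫ ω, (x ⬝ᵥ e ω)^2 :=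
    swap_lemma e heint x
  rw [hCe]
  -- pointwise decomposition
  have hs : ∀ ω, x ⬝ᵥ e ω = w * (y₁ ⬝ᵥ e₁ ω) + (1 - w) * (y₂ ⬝ᵥ e₂ ω) := by
    intro ω
    rw [hdot x ω, smul_dotProduct, smul_dotProduct, smul_eq_mul, smul_eq_mul]
  -- integrability facts
  have hu2 : Integrable (fun ω => (y₁ ⬝ᵥ e₁ ω)^2) := by
    simpa [sq] using hprodint e₁ e₁ (Or.inl rfl) (Or.inl rfl) y₁ y₁
  have hv2 : Integrable (fun ω => (y₂ ⬝ᵥ e₂ ω)^2) := by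
    simpa [sq] using hprodint e₂ e₂ (Or.inr rfl) (Or.inr rfl) y₂ y₂
  have hs2 : Integrable (fun ω => (x ⬝ᵥ e ω)^2) := by
    have : (fun ω => (x ⬝ᵥ e ω)^2) = fun ω =>
        ((w • y₁) ⬝ᵥ e₁ ω + ((1 - w) • y₂) ⬝ᵥ e₂ ω)
        * ((w • y₁) ⬝ᵥ e₁ ω + ((1 - w) • y₂) ⬝ᵥ e₂ ω) := by
      funext ω
      rw [sq, hs ω, smul_dotProduct, smul_dotProduct, smul_eq_mul, smul_eq_mul]
    rw [this]; exact hint4 _ _ _ _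
  -- main inequality chain
  have key1 : ∫ ω, (x ⬝ᵥ e ω)^2
      ≤ (w * ∫ ω, (y₁ ⬝ᵥ e₁ ω)^2) + (1 - w) * ∫ ω, (y₂ ⬝ᵥ e₂ ω)^2 := by
    have hle : ∫ ω, (x ⬝ᵥ e ω)^2
        ≤ ∫ ω, (w * (y₁ ⬝ᵥ e₁ ω)^2 + (1 - w) * (y₂ ⬝ᵥ e₂ ω)^2) := by
      refine integral_mono hs2 ((hu2.const_mul w).add (hv2.const_mul (1 - w))) fun ω => ?_
      rw [hs ω]
      nlinarith [mul_nonneg (mul_nonneg hw.le hw'.le) (sq_nonneg (y₁ ⬝ᵥ e₁ ω - y₂ ⬝ᵥ e₂ ω))]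
    rwa [integral_add (hu2.const_mul w) (hv2.const_mul (1 - w)),
      integral_const_mul, integral_const_mul] at hle
  have hb1 : ∫ ω, (y₁ ⬝ᵥ e₁ ω)^2 ≤ y₁ ⬝ᵥ (R₁ *ᵥ y₁) := by
    have h0 := hcons1.dotProduct_mulVec_nonneg y₁
    rw [show (star y₁ : Fin n → ℝ) = y₁ by simp, sub_mulVec, dotProduct_sub,
      swap_lemma e₁ (hprod e₁ e₁ (Or.inl rfl) (Or.inl rfl)) y₁] at h0
    linarith
  have hb2 : ∫ ω, (y₂ ⬝ᵥ e₂ ω)^2 ≤ y₂ ⬝ᵥ (R₂ *ᵥ y₂) := by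
    have h0 := hcons2.dotProduct_mulVec_nonneg y₂
    rw [show (star y₂ : Fin n → ℝ) = y₂ by simp, sub_mulVec, dotProduct_sub,
      swap_lemma e₂ (hprod e₂ e₂ (Or.inr rfl) (Or.inr rfl)) y₂] at h0
    linarith
  -- the algebraic identity
  have halg : w * (y₁ ⬝ᵥ (R₁ *ᵥ y₁)) + (1 - w) * (y₂ ⬝ᵥ (R₂ *ᵥ y₂)) = x ⬝ᵥ (P *ᵥ x) := by
    have h1 : R₁ *ᵥ y₁ = z := by
      rw [hy₁, mulVec_mulVec, mul_nonsing_inv R₁ (isUnit_iff_ne_zero.mpr hR₁.det_pos.ne'),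
        one_mulVec]
    have h2 : R₂ *ᵥ y₂ = z := by
      rw [hy₂, mulVec_mulVec, mul_nonsing_inv R₂ (isUnit_iff_ne_zero.mpr hR₂.det_pos.ne'),
        one_mulVec]
    have h3 : w * (y₁ ⬝ᵥ z) + (1 - w) * (y₂ ⬝ᵥ z) = (S *ᵥ z) ⬝ᵥ z := by
      rw [hSdef, add_mulVec, add_dotProduct, smul_mulVec, smul_mulVec,
        smul_dotProduct, smul_dotProduct, smul_eq_mul, smul_eq_mul, hy₁, hy₂]
    have h4 : S *ᵥ z = x := by
      rw [hz, mulVec_mulVec, hSP, one_mulVec]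
    rw [h1, h2, h3, h4, hz]
  have hfin : ∫ ω, (x ⬝ᵥ e ω)^2 ≤ x ⬝ᵥ (P *ᵥ x) := by
    calc ∫ ω, (x ⬝ᵥ e ω)^2
        ≤ (w * ∫ ω, (y₁ ⬝ᵥ e₁ ω)^2) + (1 - w) * ∫ ω, (y₂ ⬝ᵥ e₂ ω)^2 := key1
      _ ≤ w * (y₁ ⬝ᵥ (R₁ *ᵥ y₁)) + (1 - w) * (y₂ ⬝ᵥ (R₂ *ᵥ y₂)) :=
          add_le_add (mul_le_mul_of_nonneg_left hb1 hw.le)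
            (mul_le_mul_of_nonneg_left hb2 hw'.le)
      _ = x ⬝ᵥ (P *ᵥ x) := halg
  linarith
end
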